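/- arXiv:2601.10839 — 3 statements merged into one kernel-verified Lean document; each statement's English description precedes it below -/
import Mathlib

section
/- Fix σ > 0, γ > 0, and ρ ∈ (0,1). For each integer n ≠ 0, the 3×3 complex matrix M_n = [[σ|n|+1, −σ|n|+1, 0], [ρ^{|n|}, ρ^{−|n|}, −ρ^{|n|}], [σ|n|ρ^{|n|−1}, −σρ^{−|n|−1}, −(σ|n|ρ^{|n|−1} + γρ^{|n|})]] is invertible. Consequently, for every f_n ∈ ℂ there exist unique a_n, b_n, c_n ∈ ℂ solving M_n (a_n, b_n, c_n)ᵀ = (f_n, 0, 0)ᵀ, and they depend linearly on f_n. -/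
/-- Mode-by-mode solvability (n ≠ 0) of the Robin transmission problem on the unit
disk with concentric circular interface of radius ρ: the 3×3 coefficient matrix is
invertible and the Fourier coefficients `a_n, b_n, c_n` depend linearly on `f_n`. -/
theorem stmt6 (σ γ ρ : ℝ) (hσ : 0 < σ) (hγ : 0 < γ) (hρ : ρ ∈ Set.Ioo (0 : ℝ) 1)
    (n : ℤ) (hn : n ≠ 0)
    (M : Matrix (Fin 3) (Fin 3) ℂ)
    (hM : M = !![((σ * (n.natAbs : ℝ) + 1 : ℝ) : ℂ), ((-(σ * (n.natAbs : ℝ)) + 1 : ℝ) : ℂ), 0;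
        ((ρ ^ (n.natAbs : ℤ) : ℝ) : ℂ), ((ρ ^ (-(n.natAbs : ℤ)) : ℝ) : ℂ),
          ((-(ρ ^ (n.natAbs : ℤ)) : ℝ) : ℂ);
        ((σ * (n.natAbs : ℝ) * ρ ^ ((n.natAbs : ℤ) - 1) : ℝ) : ℂ),
          ((-(σ * ρ ^ (-(n.natAbs : ℤ) - 1)) : ℝ) : ℂ),
          ((-(σ * (n.natAbs : ℝ) * ρ ^ ((n.natAbs : ℤ) - 1) + γ * ρ ^ (n.natAbs : ℤ)) : ℝ) : ℂ)]) :
    IsUnit M ∧ ∃ α β ω : ℂ, ∀ f : ℂ,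
      M.mulVec ![α * f, β * f, ω * f] = ![f, 0, 0] ∧
      ∀ v : Fin 3 → ℂ, M.mulVec v = ![f, 0, 0] → v = ![α * f, β * f, ω * f] := by
  have hdet : M.det ≠ 0 := by
    subst hM
    rw [Matrix.det_fin_three]
    simp only [Matrix.cons_val', Matrix.cons_val_zero, Matrix.cons_val_one, Matrix.head_cons,
      Matrix.head_fin_const, Matrix.empty_val', Matrix.cons_val_fin_one, Matrix.of_apply,
      Matrix.cons_val_two, Matrix.tail_cons]
    norm_cast
    obtain ⟨hρ0, hρ1⟩ := hρ
    have hk1 : 1 ≤ n.natAbs := Nat.one_le_iff_ne_zero.2 (Int.natAbs_ne_zero.2 hn)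
    have habs : |n| = (n.natAbs : ℤ) := Int.abs_eq_natAbs n
    rw [habs, Int.subNatNat_eq_coe, Nat.cast_one]
    have hz1 : ρ ^ (-(n.natAbs : ℤ)) = (ρ ^ n.natAbs)⁻¹ := by
      rw [zpow_neg, zpow_natCast]
    have hz2 : ρ ^ ((n.natAbs : ℤ) - 1) = ρ ^ n.natAbs / ρ := by
      rw [zpow_sub₀ (ne_of_gt hρ0), zpow_natCast, zpow_one]
    have hz3 : ρ ^ (-(n.natAbs : ℤ) - 1) = (ρ ^ n.natAbs)⁻¹ / ρ := by
      rw [zpow_sub₀ (ne_of_gt hρ0), hz1, zpow_one]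
    rw [hz1, hz2, hz3]
    have hx0 : 0 < ρ ^ n.natAbs := pow_pos hρ0 _
    have hxρ : ρ ^ n.natAbs ≤ ρ := by
      calc ρ ^ n.natAbs ≤ ρ ^ 1 := pow_le_pow_of_le_one (le_of_lt hρ0) (le_of_lt hρ1) hk1
      _ = ρ := pow_one ρ
    have ht1 : (1:ℝ) ≤ (n.natAbs : ℝ) := by exact_mod_cast hk1
    set x := ρ ^ n.natAbs with hxdef
    set t := ((n.natAbs : ℕ) : ℝ) with htdef
    intro h
    field_simp at h
    have hx1 : x < 1 := lt_of_le_of_lt hxρ hρ1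
    have ht0 : (0:ℝ) < t := lt_of_lt_of_le zero_lt_one ht1
    have hst : 0 < σ * t := mul_pos hσ ht0
    have hfact : (((σ * t + 1) * (-(γ * x * ρ) + -(σ * t * x)) - (σ * t + 1) * x * σ) * ρ -
            x * ρ * ((-(σ * t) + 1) * x * (-(γ * x * ρ) + -(σ * t * x)))) *
          ρ +
        -((-(σ * t) + 1) * x * (σ * t * x) * (x * ρ * ρ))
        = ρ^2 * x * (γ * ρ * ((1 - σ*t) * x^2 - (σ*t + 1)) - (σ*t + 1) * (σ*t + σ)) := by
      ring
    replace h : ρ^2 * x * (γ * ρ * ((1 - σ*t) * x^2 - (σ*t + 1)) - (σ*t + 1) * (σ*t + σ)) = 0 := by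
      linear_combination (ρ^2 * x) * h
    have hneg : γ * ρ * ((1 - σ*t) * x^2 - (σ*t + 1)) - (σ*t + 1) * (σ*t + σ) < 0 := by
      have hx2 : x^2 < 1 := by nlinarith
      have hinner : (1 - σ*t) * x^2 - (σ*t + 1) < 0 := by
        nlinarith [mul_nonneg hst.le (sq_nonneg x)]
      have h3 := mul_neg_of_pos_of_neg (mul_pos hγ hρ0) hinner
      have h4 : 0 < (σ*t + 1) * (σ*t + σ) :=
        mul_pos (by linarith) (by linarith)
      linarith
    have hpos : 0 < ρ^2 * x := mul_pos (by positivity) hx0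
    nlinarith [mul_neg_of_pos_of_neg hpos hneg]
  have hu : IsUnit M := (Matrix.isUnit_iff_isUnit_det M).2 (isUnit_iff_ne_zero.2 hdet)
  refine ⟨hu, M⁻¹ 0 0, M⁻¹ 1 0, M⁻¹ 2 0, fun f => ?_⟩
  have hvec : ![M⁻¹ 0 0 * f, M⁻¹ 1 0 * f, M⁻¹ 2 0 * f] = M⁻¹.mulVec ![f, 0, 0] := by
    funext i
    fin_cases i <;>
      simp [Matrix.mulVec, dotProduct, Fin.sum_univ_three]
  constructor
  · rw [hvec, Matrix.mulVec_mulVec, Matrix.mul_nonsing_inv _ (isUnit_iff_ne_zero.2 hdet), Matrix.one_mulVec]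
  · intro v hv
    rw [hvec, ← hv, Matrix.mulVec_mulVec, Matrix.nonsing_inv_mul _ (isUnit_iff_ne_zero.2 hdet), Matrix.one_mulVec]
end

section
/- Let H be a Hilbert space, K : H → H a compact, injective, self-adjoint, positive linear operator with eigenvalues s_n > 0 and orthonormal eigenbasis (x_n). For α > 0 define the Tikhonov-regularized solution f_α = (K*K + αI)^{-1} K* g of K f = g. If g lies in the range of K^{1/2}, then sup_{α>0} (K f_α, f_α) < ∞. -/
open scoped InnerProductSpace

/-- If `K` is compact, injective, self-adjoint and positive with eigenvalues `s n > 0`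
and orthonormal eigenbasis `b`, and `g` lies in the range of `K^{1/2}` (expressed
spectrally), then the Tikhonov-regularized solutions `f α` of `K f = g`, i.e.
`(K*K + αI) f_α = K* g`, satisfy `sup_{α>0} (K f_α, f_α) < ∞`. -/
theorem stmt11 {H : Type*} [NormedAddCommGroup H] [InnerProductSpace ℂ H]
    [CompleteSpace H]
    (K : H →L[ℂ] H) (hcomp : IsCompactOperator ⇑K) (hinj : Function.Injective ⇑K)
    (hsa : IsSelfAdjoint K) (hpos : ∀ v : H, 0 ≤ (⟪K v, v⟫_ℂ).re)
    (b : HilbertBasis ℕ ℂ H) (s : ℕ → ℝ) (hs : ∀ n, 0 < s n)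
    (hKb : ∀ n, K (b n) = (s n : ℂ) • b n)
    (g : H) (hg : ∃ h : H, ∀ n, ⟪b n, g⟫_ℂ = (Real.sqrt (s n) : ℂ) * ⟪b n, h⟫_ℂ)
    (f : ℝ → H)
    (hf : ∀ α : ℝ, 0 < α →
      (((ContinuousLinearMap.adjoint K).comp K +
        (α : ℂ) • ContinuousLinearMap.id ℂ H) (f α)) = (ContinuousLinearMap.adjoint K) g) :
    ∃ C : ℝ, ∀ α : ℝ, 0 < α → (⟪K (f α), f α⟫_ℂ).re ≤ C := by
  obtain ⟨h, hgh⟩ := hg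
  -- summability of the squared coefficients of h
  have hsum_h : Summable fun n => ‖⟪b n, h⟫_ℂ‖ ^ 2 := by
    have H1 := (b.summable_inner_mul_inner h h).map Complex.reCLM Complex.reCLM.cont
    refine H1.congr fun n => ?_
    simp only [Function.comp_apply, Complex.reCLM_apply]
    rw [← inner_conj_symm h (b n), mul_comm, Complex.mul_conj]
    rw [Complex.ofReal_re, Complex.normSq_eq_norm_sq]
  refine ⟨∑' n, ‖⟪b n, h⟫_ℂ‖ ^ 2, fun α hα => ?_⟩
  have hKbn : ∀ (n : ℕ) (x : H), ⟪b n, K x⟫_ℂ = (s n : ℂ) * ⟪b n, x⟫_ℂ := by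
    intro n x
    rw [← hsa.adjoint_eq, ContinuousLinearMap.adjoint_inner_right, hKb n,
      inner_smul_left]
    simp
  have hcoef : ∀ n : ℕ,
      ((s n : ℂ) ^ 2 + (α : ℂ)) * ⟪b n, f α⟫_ℂ
        = (s n : ℂ) * (Real.sqrt (s n) : ℂ) * ⟪b n, h⟫_ℂ := by
    intro n
    have h1 := congrArg (fun x => ⟪b n, x⟫_ℂ) (hf α hα)
    simp only [ContinuousLinearMap.add_apply, ContinuousLinearMap.comp_apply,
      ContinuousLinearMap.smul_apply, ContinuousLinearMap.id_apply,
      inner_add_right, inner_smul_right, hsa.adjoint_eq] at h1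
    rw [hKbn, hKbn, hKbn, hgh n] at h1
    linear_combination h1
  have hcoef' : ∀ n : ℕ,
      ⟪b n, f α⟫_ℂ = ((s n * Real.sqrt (s n) / (s n ^ 2 + α) : ℝ) : ℂ) * ⟪b n, h⟫_ℂ := by
    intro n
    have hden : (0 : ℝ) < s n ^ 2 + α := add_pos_of_nonneg_of_pos (sq_nonneg _) hα
    have hdenC : ((s n : ℂ) ^ 2 + (α : ℂ)) ≠ 0 := by
      rw [show ((s n : ℂ) ^ 2 + (α : ℂ)) = ((s n ^ 2 + α : ℝ) : ℂ) by push_cast; ring]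
      exact_mod_cast hden.ne'
    apply mul_left_cancel₀ hdenC
    rw [hcoef n]
    push_cast
    field_simp
  -- the terms of the spectral sum
  have hterm : ∀ n : ℕ, (⟪K (f α), b n⟫_ℂ * ⟪b n, f α⟫_ℂ).re
      = s n * ‖⟪b n, f α⟫_ℂ‖ ^ 2 := by
    intro n
    rw [← inner_conj_symm (K (f α)) (b n), hKbn n (f α), map_mul,
      Complex.conj_ofReal, mul_assoc, mul_comm ((starRingEnd ℂ) _), Complex.mul_conj]
    rw [show ((s n : ℂ) * ((Complex.normSq ⟪b n, f α⟫_ℂ : ℝ) : ℂ))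
        = ((s n * Complex.normSq ⟪b n, f α⟫_ℂ : ℝ) : ℂ) by push_cast; ring]
    rw [Complex.ofReal_re, Complex.normSq_eq_norm_sq]
  have hpar := b.hasSum_inner_mul_inner (K (f α)) (f α)
  have hreval : (⟪K (f α), f α⟫_ℂ).re
      = ∑' n, s n * ‖⟪b n, f α⟫_ℂ‖ ^ 2 := by
    rw [← hpar.tsum_eq, Complex.re_tsum hpar.summable]
    exact tsum_congr hterm
  rw [hreval]
  -- termwise bound
  have hbound : ∀ n : ℕ, s n * ‖⟪b n, f α⟫_ℂ‖ ^ 2 ≤ ‖⟪b n, h⟫_ℂ‖ ^ 2 := by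
    intro n
    rw [hcoef' n]
    have hden : (0 : ℝ) < s n ^ 2 + α := add_pos_of_nonneg_of_pos (sq_nonneg _) hα
    rw [norm_mul, mul_pow, Complex.norm_real, Real.norm_eq_abs,
      abs_of_nonneg (div_nonneg (mul_nonneg (hs n).le (Real.sqrt_nonneg _)) hden.le)]
    have hsq : Real.sqrt (s n) ^ 2 = s n := Real.sq_sqrt (hs n).le
    have key : s n * (s n * Real.sqrt (s n) / (s n ^ 2 + α)) ^ 2 ≤ 1 := by
      rw [div_pow, mul_pow, hsq, mul_div_assoc']
      rw [div_le_one (by positivity)]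
      nlinarith [sq_nonneg (s n), (hs n).le, hα.le, sq_nonneg α, sq_nonneg (s n ^ 2)]
    calc s n * ((s n * Real.sqrt (s n) / (s n ^ 2 + α)) ^ 2 * ‖⟪b n, h⟫_ℂ‖ ^ 2)
        = (s n * (s n * Real.sqrt (s n) / (s n ^ 2 + α)) ^ 2) * ‖⟪b n, h⟫_ℂ‖ ^ 2 := by ring
      _ ≤ 1 * ‖⟪b n, h⟫_ℂ‖ ^ 2 := mul_le_mul_of_nonneg_right key (sq_nonneg _)
      _ = ‖⟪b n, h⟫_ℂ‖ ^ 2 := one_mul _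
  have hsum_lhs : Summable fun n => s n * ‖⟪b n, f α⟫_ℂ‖ ^ 2 :=
    Summable.of_nonneg_of_le (fun n => mul_nonneg (hs n).le (sq_nonneg _)) hbound hsum_h
  exact Summable.tsum_le_tsum hbound hsum_lhs hsum_h
end

section
/- Let H be a Hilbert space, K : H → H compact, self-adjoint, positive, and injective with eigenvalues s_n ↓ 0 and orthonormal eigenbasis (x_n). Fix g ∈ H and for α > 0 let f_α = Σ_n (φ_α(s_n)/s_n) ⟨g, x_n⟩ x_n, where φ_α is the spectral cut-off filter (φ_α(t) = 1 if t² ≥ α, else 0). Then ⟨K f_α, f_α⟩ = Σ_{n : s_n² ≥ α} s_n^{-1} |⟨g, x_n⟩|², and consequently liminf_{α→0} ⟨K f_α, f_α⟩ < ∞ if and only if Σ_n s_n^{-1} |⟨g, x_n⟩|² < ∞. -/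
open scoped InnerProductSpace

/-- Spectral cut-off range characterization: for a compact, self-adjoint, positive,
injective operator `K` with eigenvalues `s n ↓ 0` and eigenbasis `b`, the
regularized solutions `f α = ∑ (φ_α(s n)/s n) ⟨g, b n⟩ b n` (spectral cut-off filter)
satisfy `⟨K (f α), f α⟩ = ∑_{s n² ≥ α} (s n)⁻¹ |⟨g, b n⟩|²`, and
`liminf_{α→0⁺} ⟨K (f α), f α⟩ < ∞` iff `∑ (s n)⁻¹ |⟨g, b n⟩|² < ∞`. -/
theorem stmt14 {H : Type*} [NormedAddCommGroup H] [InnerProductSpace ℂ H]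
    [CompleteSpace H]
    (K : H →L[ℂ] H) (hcomp : IsCompactOperator ⇑K) (hsa : IsSelfAdjoint K)
    (hpos : ∀ v : H, 0 ≤ (⟪K v, v⟫_ℂ).re) (hinj : Function.Injective ⇑K)
    (b : HilbertBasis ℕ ℂ H) (s : ℕ → ℝ) (hs : ∀ n, 0 < s n) (hanti : Antitone s)
    (hlim : Filter.Tendsto s Filter.atTop (nhds 0))
    (hKb : ∀ n, K (b n) = (s n : ℂ) • b n)
    (g : H) (f : ℝ → H)
    (hf : ∀ α : ℝ, f α = ∑' n : ℕ,
      ((((if α ≤ (s n) ^ 2 then (1 : ℝ) else 0) / s n : ℝ) : ℂ) * ⟪b n, g⟫_ℂ) • b n) :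
    (∀ α : ℝ, 0 < α → ⟪K (f α), f α⟫_ℂ =
      ((∑' n : {n : ℕ // α ≤ (s n) ^ 2}, (s n.1)⁻¹ * ‖⟪b n.1, g⟫_ℂ‖ ^ 2 : ℝ) : ℂ)) ∧
    (Filter.liminf (fun α : ℝ => ENNReal.ofReal ((⟪K (f α), f α⟫_ℂ).re))
        (nhdsWithin 0 (Set.Ioi 0)) < ⊤ ↔
      Summable (fun n : ℕ => (s n)⁻¹ * ‖⟪b n, g⟫_ℂ‖ ^ 2)) := by
  classical
  set t : ℕ → ℝ := fun n => (s n)⁻¹ * ‖⟪b n, g⟫_ℂ‖ ^ 2 with ht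
  have htnn : ∀ n, 0 ≤ t n := fun n => by
    have := (hs n).le
    positivity
  -- finiteness of the index set for α > 0
  have hsq : Filter.Tendsto (fun n => (s n) ^ 2) Filter.atTop (nhds 0) := by
    have := hlim.pow 2
    simpa using this
  have hFin : ∀ α : ℝ, 0 < α → {n : ℕ | α ≤ (s n) ^ 2}.Finite := by
    intro α hα
    have h := hsq.eventually_lt_const hα
    rw [Filter.eventually_atTop] at h
    obtain ⟨N, hN⟩ := h
    apply (Set.finite_Iio N).subset
    intro n hn
    simp only [Set.mem_Iio]
    by_contra hc
    exact absurd (hN n (le_of_not_gt hc)) (not_lt.mpr hn)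
  -- the finset version
  have key : ∀ α : ℝ, (hα : 0 < α) → ⟪K (f α), f α⟫_ℂ =
      ((∑ n ∈ (hFin α hα).toFinset, t n : ℝ) : ℂ) := by
    intro α hα
    set c : ℕ → ℂ := fun n =>
      (((if α ≤ (s n) ^ 2 then (1 : ℝ) else 0) / s n : ℝ) : ℂ) * ⟪b n, g⟫_ℂ with hc
    set T : Finset ℕ := (hFin α hα).toFinset with hT
    have hmemT : ∀ n, n ∈ T ↔ α ≤ (s n) ^ 2 := by
      intro n; simp [hT, Set.Finite.mem_toFinset]
    have hfT : f α = ∑ n ∈ T, c n • b n := by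
      rw [hf α]
      refine tsum_eq_sum fun n hn => ?_
      have : ¬ α ≤ (s n) ^ 2 := fun h => hn ((hmemT n).2 h)
      simp [this]
    have hKfT : K (f α) = ∑ n ∈ T, ((s n : ℂ) * c n) • b n := by
      rw [hfT, map_sum]
      refine Finset.sum_congr rfl fun n _ => ?_
      rw [map_smul, hKb n, smul_smul, mul_comm]
    rw [hKfT, hfT, b.orthonormal.inner_sum]
    push_cast
    refine Finset.sum_congr rfl fun n hn => ?_
    have hα' : α ≤ (s n) ^ 2 := (hmemT n).1 hn
    have hsn := hs n
    simp only [hc, if_pos hα', map_mul, ← Complex.ofReal_div, Complex.conj_ofReal]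
    rw [mul_mul_mul_comm, mul_assoc (((1 / s n : ℝ) : ℂ)), RCLike.conj_mul]
    rw [ht]
    have hsn' : (s n : ℂ) ≠ 0 := by exact_mod_cast hsn.ne'
    push_cast
    field_simp
    rfl
  -- relate the tsum over the subtype to the finset sum
  have hsubsum : ∀ α : ℝ, (hα : 0 < α) →
      (∑' n : {n : ℕ // α ≤ (s n) ^ 2}, t n.1) = ∑ n ∈ (hFin α hα).toFinset, t n := by
    intro α hα
    have h1 : (∑' n : {n : ℕ // α ≤ (s n) ^ 2}, t n.1)
        = ∑' n : ℕ, Set.indicator {n : ℕ | α ≤ (s n) ^ 2} t n :=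
      tsum_subtype {n : ℕ | α ≤ (s n) ^ 2} t
    rw [h1, tsum_eq_sum (s := (hFin α hα).toFinset)]
    · refine Finset.sum_congr rfl fun n hn => ?_
      exact Set.indicator_of_mem ((Set.Finite.mem_toFinset _).1 hn) t
    · intro n hn
      exact Set.indicator_of_notMem (fun h => hn ((Set.Finite.mem_toFinset _).2 h)) t
  have part1 : ∀ α : ℝ, 0 < α → ⟪K (f α), f α⟫_ℂ =
      ((∑' n : {n : ℕ // α ≤ (s n) ^ 2}, (s n.1)⁻¹ * ‖⟪b n.1, g⟫_ℂ‖ ^ 2 : ℝ) : ℂ) := by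
    intro α hα
    rw [key α hα, hsubsum α hα]
  refine ⟨part1, ?_⟩
  have hre : ∀ α : ℝ, (hα : 0 < α) →
      (⟪K (f α), f α⟫_ℂ).re = ∑ n ∈ (hFin α hα).toFinset, t n := by
    intro α hα
    rw [key α hα, Complex.ofReal_re]
  constructor
  · -- liminf < ⊤ → summable
    intro hlt
    by_contra hns
    have htend := (not_summable_iff_tendsto_nat_atTop_of_nonneg htnn).1 hns
    have : Filter.liminf (fun α : ℝ => ENNReal.ofReal ((⟪K (f α), f α⟫_ℂ).re))
        (nhdsWithin 0 (Set.Ioi 0)) = ⊤ := by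
      apply ENNReal.eq_top_of_forall_nnreal_le
      intro r
      obtain ⟨N, hN⟩ := (htend.eventually (Filter.eventually_gt_atTop (r : ℝ))).exists
      have hα0 : (0 : ℝ) < (s N) ^ 2 := pow_pos (hs N) 2
      have hev : ∀ᶠ α in nhdsWithin 0 (Set.Ioi 0),
          ENNReal.ofReal (r : ℝ) ≤ ENNReal.ofReal ((⟪K (f α), f α⟫_ℂ).re) := by
        filter_upwards [Ioo_mem_nhdsGT hα0, self_mem_nhdsWithin] with α hα hαpos
        have hαpos' : (0 : ℝ) < α := hαpos
        rw [hre α hαpos']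
        apply ENNReal.ofReal_le_ofReal
        calc (r : ℝ) ≤ ∑ i ∈ Finset.range N, t i := hN.le
          _ ≤ ∑ n ∈ (hFin α hαpos').toFinset, t n := by
              apply Finset.sum_le_sum_of_subset_of_nonneg
              · intro n hn
                rw [Finset.mem_range] at hn
                rw [Set.Finite.mem_toFinset]
                have h1 : s N ≤ s n := hanti hn.le
                have h2 : (s N) ^ 2 ≤ (s n) ^ 2 :=
                  pow_le_pow_left₀ (hs N).le h1 2
                exact le_trans hα.2.le h2
              · intro n _ _; exact htnn n
      calc (r : ENNReal) = ENNReal.ofReal (r : ℝ) := ENNReal.ofReal_coe_nnreal.symm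
        _ ≤ _ := Filter.le_liminf_of_le (by isBoundedDefault) hev
    rw [this] at hlt
    exact lt_irrefl _ hlt
  · -- summable → liminf < ⊤
    intro hsum
    have hb : ∀ᶠ α in nhdsWithin 0 (Set.Ioi 0),
        ENNReal.ofReal ((⟪K (f α), f α⟫_ℂ).re) ≤ ENNReal.ofReal (∑' n, t n) := by
      filter_upwards [self_mem_nhdsWithin] with α hαpos
      have hαpos' : (0 : ℝ) < α := hαpos
      rw [hre α hαpos']
      exact ENNReal.ofReal_le_ofReal (Summable.sum_le_tsum _ (fun n _ => htnn n) hsum)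
    calc Filter.liminf _ _ ≤ Filter.limsup
          (fun α : ℝ => ENNReal.ofReal ((⟪K (f α), f α⟫_ℂ).re)) (nhdsWithin 0 (Set.Ioi 0)) :=
        Filter.liminf_le_limsup
      _ ≤ ENNReal.ofReal (∑' n, t n) := Filter.limsup_le_of_le (by isBoundedDefault) hb
      _ < ⊤ := ENNReal.ofReal_lt_top
end
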